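/- Let X₁, X₂ and Z be mutually independent real random variables, where X₁ is exponentially distributed with mean λ₁ > 0, X₂ is exponentially distributed with mean λ₂ > 0, and Z is nonnegative. Let A, B, ρ, η, u₁, u₂, u_t > 0 and set Q₁ᵖ = η·u₂/(A·λ₂) + (1/λ₁ + B·u₂/(A·λ₂))·η·u₁/B. Then ℙ( X₂ > (B·ρ·X₁·u₂ + η·ρ·Z·u₂ + u₂)/(A·ρ) and X₁ > (η·ρ·Z·u₁ + u₁)/(B·ρ) and Z > u_t/(η·ρ) ) = ( A·λ₂/(A·λ₂ + B·u₂·λ₁) ) · exp( −u₂/(A·λ₂·ρ) − (1/λ₁ + B·u₂/(A·λ₂))·u₁/(B·ρ) ) · 𝔼[ 1{Z > u_t/(η·ρ)} · exp(−Q₁ᵖ·Z) ]. -/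

import Mathlib

open MeasureTheory ProbabilityTheory Real

lemma base_lintegral (k c a : ℝ) (hk : 0 < k) (hc : 0 ≤ c) :
    ∫⁻ x in Set.Ioi a, ENNReal.ofReal (c * Real.exp (-(k * x))) =
      ENNReal.ofReal (c * Real.exp (-(k * a)) / k) := by
  have hInt : IntegrableOn (fun x => c * Real.exp (-(k * x))) (Set.Ioi a) :=
    by have := (exp_neg_integrableOn_Ioi a hk).const_mul c; simp only [neg_mul] at this ⊢; exact this
  rw [← MeasureTheory.ofReal_integral_eq_lintegral_ofReal hInt
    (Filter.Eventually.of_forall fun x => mul_nonneg hc (Real.exp_nonneg _))]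
  congr 1
  rw [MeasureTheory.integral_const_mul]
  have h := MeasureTheory.integral_comp_mul_left_Ioi (fun x => Real.exp (-x)) a hk
  simp only [smul_eq_mul] at h
  rw [integral_exp_neg_Ioi] at h
  rw [h]
  ring

lemma expLaw_Ioi (lam t : ℝ) (hlam : 0 < lam) (ht : 0 ≤ t) :
    (MeasureTheory.volume.withDensity
      (fun x => ENNReal.ofReal (if 0 ≤ x then (1 / lam) * Real.exp (-x / lam) else 0)))
      (Set.Ioi t) = ENNReal.ofReal (Real.exp (-t / lam)) := by
  rw [withDensity_apply _ measurableSet_Ioi]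
  rw [setLIntegral_congr_fun measurableSet_Ioi
    (fun x (hx : t < x) => by
      rw [if_pos (le_trans ht hx.le), show -x/lam = -(1/lam * x) by ring])]
  rw [base_lintegral (1/lam) (1/lam) t (by positivity) (by positivity)]
  congr 1
  rw [show -(1/lam * t) = -t/lam by ring]
  field_simp

lemma expLaw_lintegral (lam m a C : ℝ) (hlam : 0 < lam) (hm : 0 ≤ m) (ha : 0 ≤ a) (hC : 0 ≤ C) :
    ∫⁻ x, Set.indicator (Set.Ioi a) (fun x => ENNReal.ofReal (C * Real.exp (-(m * x)))) x
      ∂(MeasureTheory.volume.withDensity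
        (fun x => ENNReal.ofReal (if 0 ≤ x then (1 / lam) * Real.exp (-x / lam) else 0)))
    = ENNReal.ofReal (C / (lam * (1/lam + m)) * Real.exp (-((1/lam + m) * a))) := by
  have hmeasd : Measurable fun x : ℝ =>
      ENNReal.ofReal (if 0 ≤ x then (1 / lam) * Real.exp (-x / lam) else 0) := by
    apply Measurable.ennreal_ofReal
    exact Measurable.ite measurableSet_Ici ((measurable_id.neg.div_const lam).exp.const_mul _)
      measurable_const
  have hmeasi : Measurable fun x : ℝ =>
      Set.indicator (Set.Ioi a) (fun x => ENNReal.ofReal (C * Real.exp (-(m * x)))) x := by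
    apply Measurable.indicator _ measurableSet_Ioi
    exact (((measurable_id.const_mul m).neg.exp.const_mul C)).ennreal_ofReal
  rw [lintegral_withDensity_eq_lintegral_mul _ hmeasd hmeasi]
  have hk : 0 < 1/lam + m := by positivity
  have hcong : ∀ x : ℝ,
      (fun x => ENNReal.ofReal (if 0 ≤ x then (1 / lam) * Real.exp (-x / lam) else 0)) x *
        Set.indicator (Set.Ioi a) (fun x => ENNReal.ofReal (C * Real.exp (-(m * x)))) x
      = Set.indicator (Set.Ioi a)
          (fun x => ENNReal.ofReal ((C/lam) * Real.exp (-((1/lam + m) * x)))) x := by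
    intro x
    by_cases hx : x ∈ Set.Ioi a
    · rw [Set.indicator_of_mem hx, Set.indicator_of_mem hx]
      have hx0 : (0:ℝ) ≤ x := le_trans ha (le_of_lt hx)
      beta_reduce
      rw [if_pos hx0, ← ENNReal.ofReal_mul (by positivity)]
      congr 1
      have he : Real.exp (-x/lam) * Real.exp (-(m*x)) = Real.exp (-((1/lam + m) * x)) := by
        rw [← Real.exp_add]; congr 1; ring
      calc (1/lam) * Real.exp (-x/lam) * (C * Real.exp (-(m*x)))
          = (C/lam) * (Real.exp (-x/lam) * Real.exp (-(m*x))) := by ring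
        _ = (C/lam) * Real.exp (-((1/lam + m) * x)) := by rw [he]
    · rw [Set.indicator_of_notMem hx, Set.indicator_of_notMem hx, mul_zero]
  simp only [Pi.mul_apply] at *
  rw [lintegral_congr hcong, lintegral_indicator measurableSet_Ioi _,
    base_lintegral (1/lam + m) (C/lam) a hk (by positivity)]
  congr 1
  field_simp

/-- A real random variable `X` is exponentially distributed with mean `lam > 0` if its law has
density `(1/lam) * exp (-x/lam)` on `[0, ∞)` and `0` on `(-∞, 0)`. -/
def HasExpLaw {Ω : Type*} [MeasurableSpace Ω] (P : Measure Ω) (X : Ω → ℝ) (lam : ℝ) : Prop :=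
  Measurable X ∧
    P.map X = MeasureTheory.volume.withDensity
      (fun x => ENNReal.ofReal (if 0 ≤ x then (1 / lam) * Real.exp (-x / lam) else 0))

theorem stmt_11 {Ω : Type*} [MeasurableSpace Ω] (P : Measure Ω) [IsProbabilityMeasure P]
    (lam₁ lam₂ A B ρ η u₁ u₂ uₜ : ℝ)
    (hlam₁ : 0 < lam₁) (hlam₂ : 0 < lam₂) (hA : 0 < A) (hB : 0 < B) (hρ : 0 < ρ)
    (hη : 0 < η) (hu₁ : 0 < u₁) (hu₂ : 0 < u₂) (huₜ : 0 < uₜ)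
    (X₁ X₂ Z : Ω → ℝ)
    (hX₁ : HasExpLaw P X₁ lam₁) (hX₂ : HasExpLaw P X₂ lam₂)
    (hZmeas : Measurable Z) (hZnonneg : ∀ ω, 0 ≤ Z ω)
    (hindep : iIndepFun ![X₁, X₂, Z] P)
    (Q₁p : ℝ)
    (hQ₁p : Q₁p = η * u₂ / (A * lam₂) + (1 / lam₁ + B * u₂ / (A * lam₂)) * η * u₁ / B) :
    (P {ω | X₂ ω > (B * ρ * X₁ ω * u₂ + η * ρ * Z ω * u₂ + u₂) / (A * ρ) ∧
        X₁ ω > (η * ρ * Z ω * u₁ + u₁) / (B * ρ) ∧ Z ω > uₜ / (η * ρ)}).toReal =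
      (A * lam₂ / (A * lam₂ + B * u₂ * lam₁)) *
        Real.exp (-u₂ / (A * lam₂ * ρ) - (1 / lam₁ + B * u₂ / (A * lam₂)) * u₁ / (B * ρ)) *
        ∫ ω, (if Z ω > uₜ / (η * ρ) then Real.exp (-Q₁p * Z ω) else 0) ∂P := by
  obtain ⟨hX₁m, hX₁law⟩ := hX₁
  obtain ⟨hX₂m, hX₂law⟩ := hX₂
  have hA' : A ≠ 0 := ne_of_gt hA
  have hB' : B ≠ 0 := ne_of_gt hB
  have hρ' : ρ ≠ 0 := ne_of_gt hρ
  have hl₁' : lam₁ ≠ 0 := ne_of_gt hlam₁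
  have hl₂' : lam₂ ≠ 0 := ne_of_gt hlam₂
  set c := uₜ / (η * ρ) with hc_def
  have hc : 0 < c := by positivity
  set CE := A * lam₂ / (A * lam₂ + B * u₂ * lam₁) *
      Real.exp (-u₂ / (A * lam₂ * ρ) - (1 / lam₁ + B * u₂ / (A * lam₂)) * u₁ / (B * ρ))
    with hCE_def
  have hCE : 0 < CE := by positivity
  have hQ : 0 < Q₁p := by rw [hQ₁p]; positivity
  set μ₁ := P.map X₁ with hμ₁def
  set μ₂ := P.map X₂ with hμ₂def
  set μZ := P.map Z with hμZdef
  haveI : IsProbabilityMeasure μ₁ := Measure.isProbabilityMeasure_map hX₁m.aemeasurable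
  haveI : IsProbabilityMeasure μ₂ := Measure.isProbabilityMeasure_map hX₂m.aemeasurable
  haveI : IsProbabilityMeasure μZ := Measure.isProbabilityMeasure_map hZmeas.aemeasurable
  have hmeasv : ∀ i, Measurable (![X₁, X₂, Z] i) := by
    intro i
    fin_cases i
    · exact hX₁m
    · exact hX₂m
    · exact hZmeas
  have h12 : IndepFun X₁ X₂ P := by
    have := hindep.indepFun (i := 0) (j := 1) (by decide)
    simpa using this
  have h12Z : IndepFun (fun ω => (X₁ ω, X₂ ω)) Z P := by
    have := hindep.indepFun_prodMk hmeasv 0 1 2 (by decide) (by decide)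
    simpa using this
  have e2 : P.map (fun ω => (X₁ ω, X₂ ω)) = μ₁.prod μ₂ :=
    (indepFun_iff_map_prod_eq_prod_map_map hX₁m.aemeasurable hX₂m.aemeasurable).mp h12
  have e1 : P.map (fun ω => (Z ω, (X₁ ω, X₂ ω))) = μZ.prod (μ₁.prod μ₂) := by
    rw [(indepFun_iff_map_prod_eq_prod_map_map hZmeas.aemeasurable
      (hX₁m.prodMk hX₂m).aemeasurable).mp h12Z.symm, e2]
  set T : Set (ℝ × ℝ × ℝ) := {p | c < p.1 ∧ (η*ρ*p.1*u₁+u₁)/(B*ρ) < p.2.1 ∧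
      (B*ρ*p.2.1*u₂+η*ρ*p.1*u₂+u₂)/(A*ρ) < p.2.2} with hTdef
  have hT : MeasurableSet T := by
    have hf1 : Measurable fun p : ℝ × ℝ × ℝ => (η*ρ*p.1*u₁+u₁)/(B*ρ) := by fun_prop
    have hf2 : Measurable fun p : ℝ × ℝ × ℝ => (B*ρ*p.2.1*u₂+η*ρ*p.1*u₂+u₂)/(A*ρ) := by
      fun_prop
    exact MeasurableSet.inter (measurableSet_lt measurable_const measurable_fst)
      (MeasurableSet.inter (measurableSet_lt hf1 (measurable_fst.comp measurable_snd))
        (measurableSet_lt hf2 (measurable_snd.comp measurable_snd)))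
  have hev : {ω | X₂ ω > (B * ρ * X₁ ω * u₂ + η * ρ * Z ω * u₂ + u₂) / (A * ρ) ∧
        X₁ ω > (η * ρ * Z ω * u₁ + u₁) / (B * ρ) ∧ Z ω > c}
      = (fun ω => (Z ω, (X₁ ω, X₂ ω))) ⁻¹' T := by
    ext ω
    simp only [hTdef, Set.mem_setOf_eq, Set.mem_preimage, gt_iff_lt]
    tauto
  rw [hev, ← Measure.map_apply (hZmeas.prodMk (hX₁m.prodMk hX₂m)) hT, e1,
    Measure.prod_apply hT]
  have hzpt : ∀ z : ℝ, (μ₁.prod μ₂) (Prod.mk z ⁻¹' T) =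
      ENNReal.ofReal (if c < z then CE * Real.exp (-Q₁p * z) else 0) := by
    intro z
    by_cases hz : c < z
    · rw [if_pos hz]
      have hz0 : 0 < z := lt_trans hc hz
      set Czv := Real.exp (-((η*ρ*z*u₂+u₂)/(A*ρ*lam₂))) with hCzv_def
      set a := (η*ρ*z*u₁+u₁)/(B*ρ) with ha_def
      have ha : 0 < a := by positivity
      set m := B * u₂ / (A * lam₂) with hm_def
      have hm : 0 < m := by positivity
      have hpre : Prod.mk z ⁻¹' T = {q : ℝ × ℝ | a < q.1 ∧
          (B*ρ*q.1*u₂+η*ρ*z*u₂+u₂)/(A*ρ) < q.2} := by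
        ext q
        simp only [hTdef, ha_def, Set.mem_preimage, Set.mem_setOf_eq]
        tauto
      have hS : MeasurableSet {q : ℝ × ℝ | a < q.1 ∧
          (B*ρ*q.1*u₂+η*ρ*z*u₂+u₂)/(A*ρ) < q.2} := by
        have hf2 : Measurable fun q : ℝ × ℝ => (B*ρ*q.1*u₂+η*ρ*z*u₂+u₂)/(A*ρ) := by fun_prop
        exact MeasurableSet.inter (measurableSet_lt measurable_const measurable_fst)
          (measurableSet_lt hf2 measurable_snd)
      rw [hpre, Measure.prod_apply hS]
      have hinner : ∀ x : ℝ, μ₂ (Prod.mk x ⁻¹' {q : ℝ × ℝ | a < q.1 ∧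
          (B*ρ*q.1*u₂+η*ρ*z*u₂+u₂)/(A*ρ) < q.2}) =
          Set.indicator (Set.Ioi a) (fun x => ENNReal.ofReal (Czv * Real.exp (-(m * x)))) x := by
        intro x
        by_cases hx : a < x
        · have hx0 : 0 < x := lt_trans ha hx
          have hpre2 : Prod.mk x ⁻¹' {q : ℝ × ℝ | a < q.1 ∧
              (B*ρ*q.1*u₂+η*ρ*z*u₂+u₂)/(A*ρ) < q.2}
              = Set.Ioi ((B*ρ*x*u₂+η*ρ*z*u₂+u₂)/(A*ρ)) := by
            ext y
            simp only [Set.mem_preimage, Set.mem_setOf_eq, Set.mem_Ioi]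
            exact ⟨fun h => h.2, fun h => ⟨hx, h⟩⟩
          rw [hpre2, hX₂law, expLaw_Ioi lam₂ _ hlam₂ (by positivity),
            Set.indicator_of_mem (Set.mem_Ioi.mpr hx)]
          congr 1
          rw [hCzv_def, hm_def,
            show -((B*ρ*x*u₂+η*ρ*z*u₂+u₂)/(A*ρ))/lam₂
              = -((η*ρ*z*u₂+u₂)/(A*ρ*lam₂)) + -((B * u₂ / (A * lam₂))*x) by field_simp; ring,
            Real.exp_add]
        · have hpre2 : Prod.mk x ⁻¹' {q : ℝ × ℝ | a < q.1 ∧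
              (B*ρ*q.1*u₂+η*ρ*z*u₂+u₂)/(A*ρ) < q.2} = ∅ := by
            ext y
            simp only [Set.mem_preimage, Set.mem_setOf_eq, Set.mem_empty_iff_false, iff_false]
            exact fun h => hx h.1
          rw [hpre2, measure_empty, Set.indicator_of_notMem (by simpa using hx)]
      rw [lintegral_congr hinner, hX₁law,
        expLaw_lintegral lam₁ m a Czv hlam₁ hm.le ha.le (Real.exp_nonneg _)]
      congr 1
      have hL : Czv / (lam₁ * (1/lam₁ + m)) * Real.exp (-((1/lam₁ + m) * a))
          = (1/(lam₁ * (1/lam₁ + m))) *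
            Real.exp (-((η*ρ*z*u₂+u₂)/(A*ρ*lam₂)) + -((1/lam₁ + m) * a)) := by
        rw [Real.exp_add, hCzv_def]; ring
      have hR : CE * Real.exp (-Q₁p * z)
          = (A * lam₂ / (A * lam₂ + B * u₂ * lam₁)) *
            Real.exp ((-u₂ / (A * lam₂ * ρ) - (1 / lam₁ + B * u₂ / (A * lam₂)) * u₁ / (B * ρ))
              + (-Q₁p * z)) := by
        rw [hCE_def, Real.exp_add]; ring
      rw [hL, hR]
      have hk0 : (0:ℝ) < 1/lam₁ + m := by positivity
      congr 1
      · rw [hm_def]; field_simp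
      · rw [hQ₁p, hm_def, ha_def]; field_simp; ring
    · rw [if_neg hz, ENNReal.ofReal_zero]
      have : Prod.mk z ⁻¹' T = ∅ := by
        ext q
        simp only [hTdef, Set.mem_preimage, Set.mem_setOf_eq, Set.mem_empty_iff_false, iff_false]
        exact fun h => hz h.1
      rw [this, measure_empty]
  rw [lintegral_congr hzpt]
  have hFmeas : Measurable (fun z : ℝ => if c < z then CE * Real.exp (-Q₁p * z) else 0) := by
    exact Measurable.ite measurableSet_Ioi (by fun_prop) measurable_const
  have hFnn : ∀ z : ℝ, 0 ≤ (if c < z then CE * Real.exp (-Q₁p * z) else 0) := by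
    intro z; split
    · positivity
    · exact le_refl 0
  have hInt : Integrable (fun z : ℝ => if c < z then CE * Real.exp (-Q₁p * z) else 0) μZ := by
    refine Integrable.mono' (integrable_const CE) hFmeas.aestronglyMeasurable ?_
    filter_upwards with z
    by_cases hz : c < z
    · rw [if_pos hz, Real.norm_eq_abs, abs_of_nonneg (by positivity)]
      have h1 : Real.exp (-Q₁p * z) ≤ 1 := Real.exp_le_one_iff.mpr
        (by nlinarith [lt_trans hc hz])
      nlinarith
    · rw [if_neg hz]; simpa using hCE.le
  rw [← ofReal_integral_eq_lintegral_ofReal hInt (ae_of_all _ hFnn),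
    ENNReal.toReal_ofReal (integral_nonneg hFnn), hμZdef,
    integral_map hZmeas.aemeasurable hFmeas.aestronglyMeasurable,
    show CE * (∫ ω, (if Z ω > c then Real.exp (-Q₁p * Z ω) else 0) ∂P)
      = ∫ ω, CE * (if Z ω > c then Real.exp (-Q₁p * Z ω) else 0) ∂P
      from (MeasureTheory.integral_const_mul CE _).symm]
  refine integral_congr_ae (ae_of_all _ fun ω => ?_)
  by_cases h : c < Z ω <;> simp [h]
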